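/- arXiv:1809.07619 — 2 statements merged into one kernel-verified Lean document; each statement's English description precedes it below -/
import Mathlib

section
/- Let p be a prime with p ≡ 3 (mod 4), let a ≥ 1 be odd, and let c be an integer coprime to p. The linking form β on ℤ/p^a ⊕ ℤ/p^a defined by β((x₁,x₂),(y₁,y₂)) = c(x₁y₁ + x₂y₂)/p^a (mod ℤ) is not metabolic: there is no subgroup M of order p^a on which β vanishes. -/
lemma key_sq (p : ℕ) (hp : p.Prime) (h3 : p % 4 = 3) (u v : ℤ)
    (h : (p:ℤ) ∣ u^2 + v^2) : (p:ℤ) ∣ u ∧ (p:ℤ) ∣ v := by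
  haveI : Fact p.Prime := ⟨hp⟩
  have h' : ((u : ZMod p))^2 + (v : ZMod p)^2 = 0 := by
    have := (ZMod.intCast_zmod_eq_zero_iff_dvd _ p).2 h
    push_cast at this
    exact this
  have hv : (v : ZMod p) = 0 := by
    by_contra hv
    have hsq : IsSquare (-1 : ZMod p) := by
      refine ⟨(u:ZMod p) * ((v:ZMod p))⁻¹, ?_⟩
      field_simp
      linear_combination -h'
    rw [ZMod.exists_sq_eq_neg_one_iff] at hsq
    exact hsq h3
  have hu : (u : ZMod p) = 0 := by
    have : ((u : ZMod p))^2 = 0 := by rw [hv] at h'; simpa using h'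
    exact pow_eq_zero_iff (by norm_num) |>.1 this
  exact ⟨(ZMod.intCast_zmod_eq_zero_iff_dvd _ p).1 hu,
    (ZMod.intCast_zmod_eq_zero_iff_dvd _ p).1 hv⟩

/-- For a prime `p ≡ 3 (mod 4)`, odd `a ≥ 1` and `c` coprime to `p`, the linking form
`β((x₁,x₂),(y₁,y₂)) = c(x₁y₁+x₂y₂)/pᵃ` on `ℤ/pᵃ ⊕ ℤ/pᵃ` is not metabolic: there is no
subgroup of order `pᵃ` on which `β` vanishes. -/
theorem diagonal_linking_form_three_mod_four_not_metabolic (p : ℕ) (hp : p.Prime)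
    (h3 : p % 4 = 3) (a : ℕ) (ha : 1 ≤ a) (haodd : Odd a) (c : ℤ) (hc : Int.gcd c p = 1) :
    ¬ ∃ M : AddSubgroup (ZMod (p ^ a) × ZMod (p ^ a)), Nat.card M = p ^ a ∧
      ∀ x ∈ M, ∀ y ∈ M,
        ((p : ℤ) ^ a) ∣ c * ((x.1.val : ℤ) * (y.1.val : ℤ) + (x.2.val : ℤ) * (y.2.val : ℤ)) := by
  rintro ⟨M, hcard, hβ⟩
  obtain ⟨b, hb⟩ := haodd
  haveI : NeZero (p ^ a) := ⟨pow_ne_zero _ hp.ne_zero⟩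
  have hcop : IsCoprime ((p:ℤ)^a) c :=
    ((Int.isCoprime_iff_gcd_eq_one.2 hc).pow_right (n := a)).symm
  -- every element of M satisfies p^a ∣ x₁² + x₂²
  have hself : ∀ x ∈ M, ((p:ℤ)^a) ∣ ((x.1.val:ℤ))^2 + ((x.2.val:ℤ))^2 := by
    intro x hx
    have := hcop.dvd_of_dvd_mul_left (hβ x hx x hx)
    have e : ((x.1.val:ℤ)) * (x.1.val:ℤ) + (x.2.val:ℤ) * (x.2.val:ℤ)
        = ((x.1.val:ℤ))^2 + ((x.2.val:ℤ))^2 := by ring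
    rwa [e] at this
  -- divisibility by p^k by induction
  have claim : ∀ k, k ≤ b + 1 → ∀ x ∈ M, p^k ∣ x.1.val ∧ p^k ∣ x.2.val := by
    intro k
    induction k with
    | zero => intro _ x _; simp
    | succ k ih =>
      intro hk x hx
      obtain ⟨hu, hv⟩ := ih (by omega) x hx
      obtain ⟨u', hu'⟩ := hu
      obtain ⟨v', hv'⟩ := hv
      have hs := hself x hx
      have e : ((x.1.val:ℤ))^2 + ((x.2.val:ℤ))^2
          = (p:ℤ)^(2*k) * (((u':ℤ))^2 + ((v':ℤ))^2) := by
        have h1 : ((x.1.val : ℕ) : ℤ) = (p:ℤ)^k * (u' : ℤ) := by exact_mod_cast congrArg (Nat.cast : ℕ → ℤ) hu'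
        have h2 : ((x.2.val : ℕ) : ℤ) = (p:ℤ)^k * (v' : ℤ) := by exact_mod_cast congrArg (Nat.cast : ℕ → ℤ) hv'
        rw [h1, h2]; ring
      have h1 : (p:ℤ)^(2*k) * (p:ℤ) ∣ (p:ℤ)^(2*k) * (((u':ℤ))^2 + ((v':ℤ))^2) := by
        rw [← e, ← pow_succ]
        exact dvd_trans (pow_dvd_pow _ (by omega)) hs
      have hpd : (p:ℤ) ∣ ((u':ℤ))^2 + ((v':ℤ))^2 :=
        (mul_dvd_mul_iff_left (pow_ne_zero (2*k) (by exact_mod_cast hp.ne_zero))).1 h1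
      obtain ⟨du, dv⟩ := key_sq p hp h3 _ _ hpd
      have du' : p ∣ u' := by exact_mod_cast du
      have dv' : p ∣ v' := by exact_mod_cast dv
      constructor
      · obtain ⟨w, hw⟩ := du'
        exact ⟨w, by rw [hu', hw, pow_succ]; ring⟩
      · obtain ⟨w, hw⟩ := dv'
        exact ⟨w, by rw [hv', hw, pow_succ]; ring⟩
  -- injection M → Fin (p^b) × Fin (p^b)
  have hdpos : 0 < p ^ (b+1) := pow_pos hp.pos _
  have hlt : ∀ z : ZMod (p^a), z.val / p^(b+1) < p^b := by
    intro z
    rw [Nat.div_lt_iff_lt_mul hdpos, ← pow_add]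
    have : b + (b+1) = a := by omega
    rw [this]
    exact z.val_lt
  set F : M → Fin (p^b) × Fin (p^b) := fun x =>
    (⟨(x : ZMod (p^a) × ZMod (p^a)).1.val / p^(b+1), hlt _⟩,
     ⟨(x : ZMod (p^a) × ZMod (p^a)).2.val / p^(b+1), hlt _⟩) with hF
  have hinj : Function.Injective F := by
    intro x y hxy
    have d1x := (claim (b+1) le_rfl x x.2).1
    have d2x := (claim (b+1) le_rfl x x.2).2
    have d1y := (claim (b+1) le_rfl y y.2).1
    have d2y := (claim (b+1) le_rfl y y.2).2
    rw [hF, Prod.mk.injEq, Fin.mk.injEq, Fin.mk.injEq] at hxy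
    have e1 : (x : ZMod (p^a) × ZMod (p^a)).1.val = (y : ZMod (p^a) × ZMod (p^a)).1.val := by
      rw [← Nat.mul_div_cancel' d1x, ← Nat.mul_div_cancel' d1y, hxy.1]
    have e2 : (x : ZMod (p^a) × ZMod (p^a)).2.val = (y : ZMod (p^a) × ZMod (p^a)).2.val := by
      rw [← Nat.mul_div_cancel' d2x, ← Nat.mul_div_cancel' d2y, hxy.2]
    apply Subtype.ext
    exact Prod.ext (ZMod.val_injective _ e1) (ZMod.val_injective _ e2)
  have hle : Nat.card M ≤ Nat.card (Fin (p^b) × Fin (p^b)) :=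
    Nat.card_le_card_of_injective F hinj
  rw [hcard] at hle
  simp only [Nat.card_eq_fintype_card, Fintype.card_prod, Fintype.card_fin] at hle
  have : p^b * p^b < p^a := by
    rw [← pow_add, hb]
    exact Nat.pow_lt_pow_right hp.one_lt (by omega)
  omega
end

section
/- Let p be a prime, a ≥ 1 odd, γ coprime to p, and let β be the linking form on G = ℤ/p^a ⊕ ℤ/p^a given by β((x₁,x₂),(y₁,y₂)) = γ(x₁y₁ + x₂y₂)/p^a (mod ℤ). If M ⊆ G is a metabolizer (a subgroup of order p^a on which β vanishes), then M contains an element of the form (p^(a-1), α p^(a-1)) with gcd(α, p) = 1 and 1 + α² ≡ 0 (mod p). -/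
/-- Auxiliary: extract common `p`-valuation structure from `p^(2k+1) ∣ s² + t²`
when `p^(k+1) ∤ s`. -/
lemma metab_aux (p k : ℕ) (hp : p.Prime) (s t : ℤ)
    (hdvd : (p:ℤ)^(2*k+1) ∣ s^2 + t^2) (hs : ¬ (p:ℤ)^(k+1) ∣ s) :
    ∃ i ≤ k, ∃ u w : ℤ, s = (p:ℤ)^i * u ∧ t = (p:ℤ)^i * w ∧
      ¬(p:ℤ) ∣ u ∧ ¬(p:ℤ) ∣ w ∧ (p:ℤ) ∣ u^2 + w^2 := by
  have hpZ : Prime (p:ℤ) := Nat.prime_iff_prime_int.mp hp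
  have hs0 : s ≠ 0 := by rintro rfl; exact hs (dvd_zero _)
  have hn0 : s.natAbs ≠ 0 := Int.natAbs_ne_zero.mpr hs0
  set i := s.natAbs.factorization p with hi
  have hpi : (p:ℤ)^i ∣ s := by
    have := Nat.ordProj_dvd s.natAbs p
    have h2 : ((p^i : ℕ) : ℤ) ∣ s := (Int.natCast_dvd_natCast.mpr this).trans
      (Int.natAbs_dvd.mpr dvd_rfl)
    push_cast at h2; exact h2
  have hpi1 : ¬ (p:ℤ)^(i+1) ∣ s := by
    intro h
    have := Nat.pow_succ_factorization_not_dvd hn0 hp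
    apply this
    have h2 : ((p^(i+1) : ℕ) : ℤ) ∣ s := by push_cast; exact h
    exact Int.natCast_dvd.mp h2
  have hik : i ≤ k := by
    by_contra h
    exact hs ((pow_dvd_pow (p:ℤ) (by omega)).trans hpi)
  obtain ⟨u, hu⟩ := hpi
  have hpu : ¬ (p:ℤ) ∣ u := by
    rintro ⟨v, rfl⟩
    exact hpi1 ⟨v, by rw [hu]; ring⟩
  have h2i : (p:ℤ)^(2*i) ∣ t^2 := by
    have h1 : (p:ℤ)^(2*i) ∣ s^2 + t^2 := (pow_dvd_pow (p:ℤ) (by omega)).trans hdvd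
    have h2 : (p:ℤ)^(2*i) ∣ s^2 := ⟨u^2, by rw [hu]; ring⟩
    have := dvd_sub h1 h2
    simpa using this
  have hpit : (p:ℤ)^i ∣ t := by
    have : ((p:ℤ)^i)^2 ∣ t^2 := by rw [← pow_mul, mul_comm i 2]; exact h2i
    exact (Int.pow_dvd_pow_iff two_ne_zero).mp this
  obtain ⟨w, hw⟩ := hpit
  have hsum : (p:ℤ) ∣ u^2 + w^2 := by
    have h1 : (p:ℤ)^(2*i+1) ∣ s^2 + t^2 := (pow_dvd_pow (p:ℤ) (by omega)).trans hdvd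
    have h2 : s^2 + t^2 = (p:ℤ)^(2*i) * (u^2 + w^2) := by rw [hu, hw]; ring
    rw [h2, pow_add] at h1
    exact (mul_dvd_mul_iff_left (pow_ne_zero (2*i) hpZ.ne_zero)).mp (by simpa using h1)
  have hpw : ¬ (p:ℤ) ∣ w := by
    intro h
    have hw2 : (p:ℤ) ∣ w^2 := h.trans ⟨w, sq w⟩
    have hu2 : (p:ℤ) ∣ u^2 := by
      have := dvd_sub hsum hw2
      simpa using this
    exact hpu (hpZ.dvd_of_dvd_pow hu2)
  exact ⟨i, hik, u, w, hu, hw, hpu, hpw, hsum⟩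

/-- Let `p` be prime, `a ≥ 1` odd, `γ` coprime to `p`, and let `β` be the linking form on
`G = ℤ/pᵃ ⊕ ℤ/pᵃ` given by `β((x₁,x₂),(y₁,y₂)) = γ(x₁y₁+x₂y₂)/pᵃ (mod ℤ)`.  If `M ⊆ G` is a
metabolizer (a subgroup of order `pᵃ` on which `β` vanishes), then `M` contains an element of
the form `(p^(a-1), α·p^(a-1))` with `gcd(α,p) = 1` and `p ∣ 1 + α²`. -/
theorem metabolizer_contains_special_element (p a : ℕ) (hp : p.Prime) (ha : 1 ≤ a)
    (haodd : Odd a) (γ : ℤ) (hγ : Int.gcd γ p = 1)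
    (M : AddSubgroup (ZMod (p ^ a) × ZMod (p ^ a))) (hcard : Nat.card M = p ^ a)
    (hvan : ∀ x ∈ M, ∀ y ∈ M,
      ((p : ℤ) ^ a) ∣ γ * ((x.1.val : ℤ) * (y.1.val : ℤ) + (x.2.val : ℤ) * (y.2.val : ℤ))) :
    ∃ α : ℤ, Int.gcd α p = 1 ∧ (p : ℤ) ∣ 1 + α ^ 2 ∧
      ((((p ^ (a - 1) : ℕ) : ZMod (p ^ a)),
        (α : ZMod (p ^ a)) * ((p ^ (a - 1) : ℕ) : ZMod (p ^ a))) ∈ M) := by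
  obtain ⟨k, hk⟩ := haodd
  haveI : NeZero (p ^ a) := ⟨pow_ne_zero a hp.pos.ne'⟩
  have hpZ : Prime (p:ℤ) := Nat.prime_iff_prime_int.mp hp
  -- Step 1: find an element of M not killed by p^k
  have hex : ∃ m ∈ M, ¬ (p^(k+1) ∣ m.1.val) ∨ ¬ (p^(k+1) ∣ m.2.val) := by
    by_contra hcon
    push_neg at hcon
    have hsplit : p ^ a = p^(k+1) * p^k := by rw [← pow_add]; congr 1; omega
    have hlt : ∀ x : ZMod (p^a), x.val < p^(k+1) * p^k := by
      intro x; rw [← hsplit]; exact ZMod.val_lt x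
    let f : M → Fin (p^k) × Fin (p^k) := fun x =>
      (⟨x.1.1.val / p^(k+1), Nat.div_lt_of_lt_mul (hlt _)⟩,
       ⟨x.1.2.val / p^(k+1), Nat.div_lt_of_lt_mul (hlt _)⟩)
    have hinj : Function.Injective f := by
      intro x y hxy
      obtain ⟨h1, h2⟩ := Prod.mk.injEq _ _ _ _ ▸ hxy
      have hx := hcon x.1 x.2
      have hy := hcon y.1 y.2
      have e1 : x.1.1.val = y.1.1.val := by
        rw [← Nat.mul_div_cancel' hx.1, ← Nat.mul_div_cancel' hy.1]
        rw [Fin.mk.injEq] at h1; rw [h1]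
      have e2 : x.1.2.val = y.1.2.val := by
        rw [← Nat.mul_div_cancel' hx.2, ← Nat.mul_div_cancel' hy.2]
        rw [Fin.mk.injEq] at h2; rw [h2]
      have q1 : x.1.1 = y.1.1 := ZMod.val_injective _ e1
      have q2 : x.1.2 = y.1.2 := ZMod.val_injective _ e2
      exact Subtype.ext (Prod.ext q1 q2)
    have hle := Nat.card_le_card_of_injective f hinj
    have hfin : Nat.card (Fin (p^k) × Fin (p^k)) = p^k * p^k := by
      rw [Nat.card_prod, Nat.card_eq_of_equiv_fin (Equiv.refl _)]
    rw [hfin, hcard] at hle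
    have hlt2 : p ^ (k+k) < p ^ a := Nat.pow_lt_pow_right hp.one_lt (by omega)
    rw [pow_add] at hlt2
    omega
  obtain ⟨m, hm, hor⟩ := hex
  -- Step 2: self-linking vanishes
  have hself := hvan m hm m hm
  have hcop : IsCoprime ((p:ℤ)^a) γ := by
    apply IsCoprime.pow_left
    rw [Int.isCoprime_iff_gcd_eq_one]
    rw [Int.gcd_comm]
    exact hγ
  have hdvd0 : (p:ℤ)^a ∣ (m.1.val : ℤ)^2 + (m.2.val : ℤ)^2 := by
    have := hcop.dvd_of_dvd_mul_left hself
    have e : (m.1.val : ℤ) * (m.1.val : ℤ) + (m.2.val : ℤ) * (m.2.val : ℤ)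
        = (m.1.val : ℤ)^2 + (m.2.val : ℤ)^2 := by ring
    rwa [e] at this
  have hdvd : (p:ℤ)^(2*k+1) ∣ (m.1.val : ℤ)^2 + (m.2.val : ℤ)^2 := by
    have e : 2*k+1 = a := by omega
    rw [e]
    exact hdvd0
  -- Step 3: apply aux in either case
  have key : ∃ i ≤ k, ∃ u w : ℤ, (m.1.val : ℤ) = (p:ℤ)^i * u ∧ (m.2.val : ℤ) = (p:ℤ)^i * w ∧
      ¬(p:ℤ) ∣ u ∧ ¬(p:ℤ) ∣ w ∧ (p:ℤ) ∣ u^2 + w^2 := by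
    rcases hor with h | h
    · refine metab_aux p k hp _ _ hdvd ?_
      intro hc
      apply h
      have : ((p^(k+1) : ℕ) : ℤ) ∣ (m.1.val : ℤ) := by push_cast; exact hc
      exact_mod_cast this
    · have h' : ¬ (p:ℤ)^(k+1) ∣ (m.2.val : ℤ) := by
        intro hc
        apply h
        have : ((p^(k+1) : ℕ) : ℤ) ∣ (m.2.val : ℤ) := by push_cast; exact hc
        exact_mod_cast this
      obtain ⟨i, hik, u, w, h1, h2, h3, h4, h5⟩ :=
        metab_aux p k hp (m.2.val : ℤ) (m.1.val : ℤ) (by rw [add_comm ((m.2.val:ℤ)^2)]; exact hdvd) h'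
      exact ⟨i, hik, w, u, h2, h1, h4, h3, by rw [add_comm (w^2)]; exact h5⟩
  obtain ⟨i, hik, u, w, hsu, htw, hpu, hpw, hsum⟩ := key
  -- Step 4: invert u mod p^a
  have hcopu : IsCoprime ((p:ℤ)^a) u := by
    apply IsCoprime.pow_left
    exact (hpZ.coprime_iff_not_dvd).mpr hpu
  obtain ⟨x, y, hxy⟩ := hcopu
  have hpy : ¬ (p:ℤ) ∣ y := by
    intro hd
    have hppa : (p:ℤ) ∣ (p:ℤ)^a := dvd_pow_self _ (by omega)
    have : (p:ℤ) ∣ 1 := by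
      rw [← hxy]
      exact dvd_add (Dvd.dvd.mul_left hppa x) (Dvd.dvd.mul_right hd u)
    exact hpZ.not_dvd_one this
  refine ⟨y * w, ?_, ?_, ?_⟩
  · rw [← Int.isCoprime_iff_gcd_eq_one]
    apply IsCoprime.symm
    apply (hpZ.coprime_iff_not_dvd).mpr
    intro hd
    rcases hpZ.dvd_mul.mp hd with h | h
    · exact hpy h
    · exact hpw h
  · have e : 1 + (y*w)^2 = (1 - y*u)*(1 + y*u) + y^2*(u^2+w^2) := by ring
    rw [e]
    apply dvd_add
    · apply Dvd.dvd.mul_right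
      have : 1 - y*u = x * (p:ℤ)^a := by linarith [hxy]
      rw [this]
      exact Dvd.dvd.mul_left (dvd_pow_self _ (by omega)) x
    · exact Dvd.dvd.mul_left hsum (y^2)
  · -- membership
    have hmem := M.zsmul_mem hm (y * (p:ℤ)^(2*k - i))
    have hfst : ((y * (p:ℤ)^(2*k-i)) • m).1 = ((p ^ (a - 1) : ℕ) : ZMod (p ^ a)) := by
      have : ((y * (p:ℤ)^(2*k-i)) • m).1 = (y * (p:ℤ)^(2*k-i)) • m.1 := rfl
      rw [this, zsmul_eq_mul]
      have em1 : m.1 = (((m.1.val : ℤ) : ZMod (p^a))) := by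
        push_cast
        rw [ZMod.natCast_val, ZMod.cast_id]
      rw [em1, hsu]
      push_cast
      have hyu : (y : ZMod (p^a)) * (u : ZMod (p^a)) = 1 := by
        have : ((y * u : ℤ) : ZMod (p^a)) = ((1 - x * (p:ℤ)^a : ℤ) : ZMod (p^a)) := by
          congr 1; linarith [hxy]
        push_cast at this
        rw [show ((p:ZMod (p^a)))^a = 0 by
          have := ZMod.natCast_self (p^a); push_cast at this; exact this] at this
        simpa using this
      have hpow : (p : ZMod (p^a))^(2*k-i) * (p : ZMod (p^a))^i = (p : ZMod (p^a))^(a-1) := by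
        rw [← pow_add]; congr 1; omega
      calc (y : ZMod (p^a)) * (p : ZMod (p^a))^(2*k-i) * ((p : ZMod (p^a))^i * (u : ZMod (p^a)))
          = ((y : ZMod (p^a)) * (u : ZMod (p^a))) * ((p : ZMod (p^a))^(2*k-i) * (p : ZMod (p^a))^i) := by ring
        _ = (p : ZMod (p^a))^(a-1) := by rw [hyu, hpow, one_mul]
    have hsnd : ((y * (p:ℤ)^(2*k-i)) • m).2
        = ((y*w : ℤ) : ZMod (p^a)) * ((p ^ (a - 1) : ℕ) : ZMod (p ^ a)) := by
      have : ((y * (p:ℤ)^(2*k-i)) • m).2 = (y * (p:ℤ)^(2*k-i)) • m.2 := rfl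
      rw [this, zsmul_eq_mul]
      have em2 : m.2 = (((m.2.val : ℤ) : ZMod (p^a))) := by
        push_cast
        rw [ZMod.natCast_val, ZMod.cast_id]
      rw [em2, htw]
      push_cast
      have hpow : (p : ZMod (p^a))^(2*k-i) * (p : ZMod (p^a))^i = (p : ZMod (p^a))^(a-1) := by
        rw [← pow_add]; congr 1; omega
      calc (y : ZMod (p^a)) * (p : ZMod (p^a))^(2*k-i) * ((p : ZMod (p^a))^i * (w : ZMod (p^a)))
          = ((y : ZMod (p^a)) * (w : ZMod (p^a))) * ((p : ZMod (p^a))^(2*k-i) * (p : ZMod (p^a))^i) := by ring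
        _ = (y : ZMod (p^a)) * (w : ZMod (p^a)) * (p : ZMod (p^a))^(a-1) := by rw [hpow]
    have : (((p ^ (a - 1) : ℕ) : ZMod (p ^ a)),
        ((y*w : ℤ) : ZMod (p ^ a)) * ((p ^ (a - 1) : ℕ) : ZMod (p ^ a)))
        = (y * (p:ℤ)^(2*k-i)) • m := by
      apply Prod.ext
      · rw [hfst]
      · rw [hsnd]
    rw [this]
    exact hmem
end
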